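/- Let f:[0,1] → ℝ be absolutely continuous with f(0) = f(1) = 0 and sup_{t∈[0,1]} |f(t)| ≥ a for some a > 0. Then ∫_0^1 |f'(t)|² dt ≥ 4a². -/

import Mathlib

open MeasureTheory

/-- If `f : [0,1] → ℝ` is absolutely continuous (given here via an integrable
derivative `f'` and the fundamental theorem of calculus) with `f(0) = f(1) = 0`
and `sup |f| ≥ a`, then `∫_0^1 |f'|² ≥ 4a²`. -/
theorem dirichlet_energy_of_excursion (f f' : ℝ → ℝ) (a : ℝ) (ha : 0 < a)
    (hint : IntegrableOn f' (Set.Icc (0:ℝ) 1))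
    (hftc : ∀ s t : ℝ, 0 ≤ s → s ≤ t → t ≤ 1 → f t - f s = ∫ u in s..t, f' u)
    (hf0 : f 0 = 0) (hf1 : f 1 = 0)
    (hsup : ∃ t₀ ∈ Set.Icc (0:ℝ) 1, a ≤ |f t₀|) :
    ENNReal.ofReal (4 * a^2) ≤ ∫⁻ t in Set.Ioc (0:ℝ) 1, ENNReal.ofReal ((f' t)^2) := by
  obtain ⟨t₀, ⟨ht0, ht1⟩, hat⟩ := hsup
  -- interval integrability
  have hii1 : IntervalIntegrable f' volume 0 t₀ :=
    (intervalIntegrable_iff_integrableOn_Icc_of_le ht0).mpr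
      (hint.mono_set (Set.Icc_subset_Icc le_rfl ht1))
  have hii2 : IntervalIntegrable f' volume t₀ 1 :=
    (intervalIntegrable_iff_integrableOn_Icc_of_le ht1).mpr
      (hint.mono_set (Set.Icc_subset_Icc ht0 le_rfl))
  have hii : IntervalIntegrable f' volume 0 1 :=
    (intervalIntegrable_iff_integrableOn_Icc_of_le zero_le_one).mpr hint
  -- Step 1: 2a ≤ ∫_0^1 |f'|
  have h1 : f t₀ = ∫ u in (0:ℝ)..t₀, f' u := by
    have := hftc 0 t₀ le_rfl ht0 ht1; simpa [hf0] using this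
  have h2 : -f t₀ = ∫ u in t₀..(1:ℝ), f' u := by
    have := hftc t₀ 1 ht0 ht1 le_rfl
    rw [hf1] at this; linarith [this]
  have hb1 : |f t₀| ≤ ∫ u in (0:ℝ)..t₀, |f' u| := by
    rw [h1]; exact intervalIntegral.abs_integral_le_integral_abs ht0
  have hb2 : |f t₀| ≤ ∫ u in t₀..(1:ℝ), |f' u| := by
    rw [show |f t₀| = |(-f t₀)| by rw [abs_neg], h2]
    exact intervalIntegral.abs_integral_le_integral_abs ht1
  have hadd : (∫ u in (0:ℝ)..t₀, |f' u|) + ∫ u in t₀..(1:ℝ), |f' u|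
      = ∫ u in (0:ℝ)..1, |f' u| :=
    intervalIntegral.integral_add_adjacent_intervals hii1.abs hii2.abs
  have hstep1 : 2 * a ≤ ∫ u in Set.Ioc (0:ℝ) 1, |f' u| := by
    have : 2 * a ≤ ∫ u in (0:ℝ)..1, |f' u| := by
      rw [← hadd]; linarith
    rwa [intervalIntegral.integral_of_le zero_le_one] at this
  -- Step 2: move to lintegral
  have habs : IntegrableOn (fun u => |f' u|) (Set.Ioc (0:ℝ) 1) :=
    (hint.mono_set Set.Ioc_subset_Icc_self).abs
  have hlin : ENNReal.ofReal (2 * a) ≤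
      ∫⁻ u in Set.Ioc (0:ℝ) 1, ENNReal.ofReal (|f' u|) := by
    rw [← ofReal_integral_eq_lintegral_ofReal habs
      (Filter.Eventually.of_forall fun u => abs_nonneg _)]
    exact ENNReal.ofReal_le_ofReal hstep1
  -- Step 3: Cauchy-Schwarz via Hölder with p = q = 2
  set μ := volume.restrict (Set.Ioc (0:ℝ) 1)
  have hmeas : AEMeasurable (fun u => ENNReal.ofReal (|f' u|)) μ :=
    habs.aestronglyMeasurable.aemeasurable.ennreal_ofReal
  have hpq : (2:ℝ).HolderConjugate 2 := Real.HolderConjugate.two_two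
  have hcs := ENNReal.lintegral_mul_le_Lp_mul_Lq μ hpq hmeas
    (aemeasurable_const : AEMeasurable (fun _ : ℝ => (1:ENNReal)) μ)
  simp only [μ, Pi.mul_apply, Pi.one_apply, mul_one, one_mul, ENNReal.one_rpow,
    lintegral_const, Measure.restrict_apply_univ, Real.volume_Ioc, sub_zero,
    ENNReal.ofReal_one] at hcs
  have hrw : ∀ u : ℝ, ENNReal.ofReal |f' u| ^ (2:ℝ) = ENNReal.ofReal ((f' u)^2) := by
    intro u
    rw [ENNReal.ofReal_rpow_of_nonneg (abs_nonneg _) (by norm_num : (0:ℝ) ≤ 2)]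
    congr 1
    rw [show ((2:ℝ)) = ((2:ℕ):ℝ) by norm_num, Real.rpow_natCast, sq_abs]
  simp only [hrw] at hcs
  have hkey : ENNReal.ofReal (2*a) ≤
      (∫⁻ u, ENNReal.ofReal ((f' u)^2) ∂μ) ^ ((1:ℝ)/2) := le_trans hlin hcs
  have h2' := ENNReal.rpow_le_rpow hkey (by norm_num : (0:ℝ) ≤ 2)
  rw [← ENNReal.rpow_mul] at h2'
  norm_num at h2'
  calc ENNReal.ofReal (4 * a^2) = ENNReal.ofReal (2*a) ^ (2:ℕ) := by
        rw [← ENNReal.ofReal_pow (by positivity)]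
        congr 1
        ring
    _ ≤ ∫⁻ u, ENNReal.ofReal ((f' u)^2) ∂μ := by
        rw [ENNReal.ofReal_mul (by norm_num : (0:ℝ) ≤ 2)]; simpa using h2'
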